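/- Let Ṡ = ∏_{j=1}^m X_j − p_1(1 + ∑_{j=1}^m μ_j^{-1}Ẋ_j). Then E[Ṡ²] = p_1(∏_{j=1}^m (1+μ_j) − p_1(1+s_1)). -/

import Mathlib

open MeasureTheory ProbabilityTheory Finset
open scoped NNReal

/-- The law of `m` independent Poisson random variables `X_j ~ Poisson (μ j)`,
as a product measure on `Fin m → ℕ`. -/
noncomputable def poissonPi {m : ℕ} (μ : Fin m → ℝ≥0) : Measure (Fin m → ℕ) :=
  Measure.pi fun j => poissonMeasure (μ j)

section helpers
open Real
open scoped Nat

lemma integral_pi_nat {m : ℕ} (ν : Fin m → Measure ℕ) [h : ∀ i, SigmaFinite (ν i)]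
    (f : Fin m → ℕ → ℝ) :
    ∫ x : Fin m → ℕ, ∏ i, f i (x i) ∂(Measure.pi ν) = ∏ i, ∫ x, f i x ∂(ν i) :=
  MeasureTheory.integral_fintype_prod_eq_prod f

lemma integrable_pi_nat {m : ℕ} (ν : Fin m → Measure ℕ) [h : ∀ i, SigmaFinite (ν i)]
    {f : Fin m → ℕ → ℝ} (hf : ∀ i, Integrable (f i) (ν i)) :
    Integrable (fun x : Fin m → ℕ => ∏ i, f i (x i)) (Measure.pi ν) :=
  MeasureTheory.Integrable.fintype_prod_dep hf

lemma hasSum_exp_nn (r : ℝ≥0) : HasSum (fun n : ℕ => (r : ℝ) ^ n / n !) (Real.exp r) := by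
  rw [Real.exp_eq_exp_ℝ]
  exact NormedSpace.expSeries_div_hasSum_exp (r : ℝ)

lemma hasSum_n_exp (r : ℝ≥0) :
    HasSum (fun n : ℕ => (n : ℝ) * ((r : ℝ) ^ n / n !)) ((r : ℝ) * Real.exp r) := by
  have h := (hasSum_exp_nn r).mul_left (r : ℝ)
  have h2 : (fun n : ℕ => (r : ℝ) * ((r : ℝ) ^ n / n !))
      = fun n : ℕ => ((n + 1 : ℕ) : ℝ) * ((r : ℝ) ^ (n + 1) / (n + 1)!) := by
    funext n
    have hn : ((n ! : ℕ) : ℝ) ≠ 0 := Nat.cast_ne_zero.2 n.factorial_ne_zero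
    field_simp [Nat.factorial_succ]
    rw [Nat.factorial_succ]; push_cast; ring
  rw [h2] at h
  have := (hasSum_nat_add_iff (f := fun n : ℕ => (n : ℝ) * ((r : ℝ) ^ n / n !)) 1).mp h
  simpa using this

lemma hasSum_nn1_exp (r : ℝ≥0) :
    HasSum (fun n : ℕ => (n : ℝ) * ((n : ℝ) - 1) * ((r : ℝ) ^ n / n !))
      ((r : ℝ) ^ 2 * Real.exp r) := by
  have h := (hasSum_exp_nn r).mul_left ((r : ℝ) ^ 2)
  have h2 : (fun n : ℕ => (r : ℝ) ^ 2 * ((r : ℝ) ^ n / n !))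
      = fun n : ℕ => ((n + 2 : ℕ) : ℝ) * (((n + 2 : ℕ) : ℝ) - 1) * ((r : ℝ) ^ (n + 2) / (n + 2)!) := by
    funext n
    have hn : ((n ! : ℕ) : ℝ) ≠ 0 := Nat.cast_ne_zero.2 n.factorial_ne_zero
    have : (n + 2)! = (n + 2) * ((n + 1) * n !) := by
      rw [Nat.factorial_succ, Nat.factorial_succ]
    rw [this]
    push_cast
    field_simp
    ring
  rw [h2] at h
  have := (hasSum_nat_add_iff (f := fun n : ℕ => (n : ℝ) * ((n : ℝ) - 1) * ((r : ℝ) ^ n / n !)) 2).mp h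
  simpa [Finset.sum_range_succ] using this

lemma hasSum_pois_n (r : ℝ≥0) :
    HasSum (fun n : ℕ => poissonPMFReal r n * (n : ℝ)) (r : ℝ) := by
  have h := (hasSum_n_exp r).mul_left (Real.exp (-(r : ℝ)))
  have h2 : (fun n : ℕ => Real.exp (-(r : ℝ)) * ((n : ℝ) * ((r : ℝ) ^ n / n !)))
      = fun n : ℕ => poissonPMFReal r n * (n : ℝ) := by
    funext n; unfold poissonPMFReal; ring
  rw [h2] at h
  have : Real.exp (-(r : ℝ)) * ((r : ℝ) * Real.exp r) = (r : ℝ) := by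
    rw [Real.exp_neg]
    field_simp
  rwa [this] at h

lemma hasSum_pois_nsq (r : ℝ≥0) :
    HasSum (fun n : ℕ => poissonPMFReal r n * (n : ℝ) ^ 2) ((r : ℝ) + (r : ℝ) ^ 2) := by
  have h1 := (hasSum_nn1_exp r).mul_left (Real.exp (-(r : ℝ)))
  have h2 := hasSum_pois_n r
  have h3 := h1.add h2
  have heq : (fun n : ℕ => Real.exp (-(r : ℝ)) * ((n : ℝ) * ((n : ℝ) - 1) * ((r : ℝ) ^ n / n !))
      + poissonPMFReal r n * (n : ℝ))
      = fun n : ℕ => poissonPMFReal r n * (n : ℝ) ^ 2 := by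
    funext n; unfold poissonPMFReal; ring
  rw [heq] at h3
  have : Real.exp (-(r : ℝ)) * ((r : ℝ) ^ 2 * Real.exp r) + (r : ℝ) = (r : ℝ) + (r : ℝ) ^ 2 := by
    rw [Real.exp_neg]; field_simp; ring
  rwa [this] at h3

lemma poissonMeasure_singleton (r : ℝ≥0) (n : ℕ) :
    poissonMeasure r {n} = ENNReal.ofReal (poissonPMFReal r n) := by
  rw [ProbabilityTheory.poissonMeasure_singleton]
  rfl

lemma integrable_poisson_of_summable (r : ℝ≥0) (f : ℕ → ℝ)
    (h : Summable fun n => poissonPMFReal r n * |f n|) :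
    Integrable f (poissonMeasure r) := by
  refine ⟨(measurable_from_top (f := f)).aestronglyMeasurable, ?_⟩
  rw [hasFiniteIntegral_iff_norm, lintegral_countable']
  have heq : ∀ n : ℕ, ENNReal.ofReal ‖f n‖ * poissonMeasure r {n}
      = ENNReal.ofReal (poissonPMFReal r n * |f n|) := by
    intro n
    rw [_root_.poissonMeasure_singleton, ← ENNReal.ofReal_mul (norm_nonneg _), Real.norm_eq_abs,
      mul_comm]
  simp_rw [heq]
  rw [← ENNReal.ofReal_tsum_of_nonneg (fun n => mul_nonneg poissonPMFReal_nonneg (abs_nonneg _)) h]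
  exact ENNReal.ofReal_lt_top

lemma integral_poisson_eq_tsum (r : ℝ≥0) (f : ℕ → ℝ) (hf : Integrable f (poissonMeasure r)) :
    ∫ n, f n ∂(poissonMeasure r) = ∑' n, poissonPMFReal r n * f n := by
  rw [integral_countable hf]
  congr 1
  funext n
  rw [smul_eq_mul, poissonMeasure_real_singleton]
  rfl

lemma poisson_quad (r : ℝ≥0) (a b c : ℝ) (f : ℕ → ℝ)
    (hf : ∀ n : ℕ, f n = a * (n : ℝ) ^ 2 + b * (n : ℝ) + c) :
    Integrable f (poissonMeasure r) ∧
      ∫ n, f n ∂(poissonMeasure r) = a * ((r : ℝ) + (r : ℝ) ^ 2) + b * (r : ℝ) + c := by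
  have hsum : HasSum (fun n : ℕ => poissonPMFReal r n * f n)
      (a * ((r : ℝ) + (r : ℝ) ^ 2) + b * (r : ℝ) + c) := by
    have h := (((hasSum_pois_nsq r).mul_left a).add ((hasSum_pois_n r).mul_left b)).add
      ((poissonPMFRealSum r).mul_left c)
    have heq : (fun n : ℕ => a * (poissonPMFReal r n * (n : ℝ) ^ 2)
        + b * (poissonPMFReal r n * (n : ℝ)) + c * poissonPMFReal r n)
        = fun n : ℕ => poissonPMFReal r n * f n := by
      funext n; rw [hf n]; ring
    rw [← heq]; simpa [poissonPMFReal] using h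
  have hint : Integrable f (poissonMeasure r) := by
    apply integrable_poisson_of_summable
    have hmaj : HasSum (fun n : ℕ => poissonPMFReal r n * (|a| * (n : ℝ) ^ 2 + |b| * (n : ℝ) + |c|))
        (|a| * ((r : ℝ) + (r : ℝ) ^ 2) + |b| * (r : ℝ) + |c|) := by
      have h := (((hasSum_pois_nsq r).mul_left |a|).add ((hasSum_pois_n r).mul_left |b|)).add
        ((poissonPMFRealSum r).mul_left |c|)
      have heq : (fun n : ℕ => |a| * (poissonPMFReal r n * (n : ℝ) ^ 2)
          + |b| * (poissonPMFReal r n * (n : ℝ)) + |c| * poissonPMFReal r n)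
          = fun n : ℕ => poissonPMFReal r n * (|a| * (n : ℝ) ^ 2 + |b| * (n : ℝ) + |c|) := by
        funext n; ring
      rw [← heq]; simpa [poissonPMFReal] using h
    refine Summable.of_nonneg_of_le
      (fun n => mul_nonneg poissonPMFReal_nonneg (abs_nonneg _)) (fun n => ?_) hmaj.summable
    refine mul_le_mul_of_nonneg_left ?_ poissonPMFReal_nonneg
    rw [hf n]
    calc |a * (n : ℝ) ^ 2 + b * (n : ℝ) + c|
        ≤ |a * (n : ℝ) ^ 2 + b * (n : ℝ)| + |c| := abs_add_le _ _
      _ ≤ |a * (n : ℝ) ^ 2| + |b * (n : ℝ)| + |c| := by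
          gcongr; exact abs_add_le _ _
      _ = |a| * (n : ℝ) ^ 2 + |b| * (n : ℝ) + |c| := by
          rw [abs_mul, abs_mul, abs_of_nonneg (by positivity : (0:ℝ) ≤ (n:ℝ) ^ 2),
            abs_of_nonneg (by positivity : (0:ℝ) ≤ (n:ℝ))]
  exact ⟨hint, by rw [integral_poisson_eq_tsum r f hint, hsum.tsum_eq]⟩

noncomputable def fXD {m : ℕ} (μ : Fin m → ℝ≥0) (j k : Fin m) : ℕ → ℝ :=
  fun n => if k = j then (n : ℝ) * ((n : ℝ) - μ k) else (n : ℝ)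

noncomputable def fD {m : ℕ} (μ : Fin m → ℝ≥0) (j k : Fin m) : ℕ → ℝ :=
  fun n => if k = j then (n : ℝ) - μ k else 1

noncomputable def fDD {m : ℕ} (μ : Fin m → ℝ≥0) (j k i : Fin m) : ℕ → ℝ :=
  fun n => (if i = j then (n : ℝ) - μ i else 1) * (if i = k then (n : ℝ) - μ i else 1)

lemma fXD_prod {m : ℕ} (μ : Fin m → ℝ≥0) (j : Fin m) (x : Fin m → ℕ) :
    ∏ k, fXD μ j k (x k) = (∏ k, (x k : ℝ)) * ((x j : ℝ) - μ j) := by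
  have h1 : ∀ k : Fin m, fXD μ j k (x k) = (x k : ℝ) * (if k = j then (x k : ℝ) - μ k else 1) := by
    intro k; unfold fXD; by_cases h : k = j <;> simp [h]
  rw [Finset.prod_congr rfl (fun k _ => h1 k), Finset.prod_mul_distrib,
    Finset.prod_ite_eq' Finset.univ j (fun k => (x k : ℝ) - μ k)]
  simp

lemma fD_prod {m : ℕ} (μ : Fin m → ℝ≥0) (j : Fin m) (x : Fin m → ℕ) :
    ∏ k, fD μ j k (x k) = (x j : ℝ) - μ j := by
  unfold fD
  rw [Finset.prod_ite_eq' Finset.univ j (fun k => (x k : ℝ) - μ k)]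
  simp

lemma fDD_prod {m : ℕ} (μ : Fin m → ℝ≥0) (j k : Fin m) (x : Fin m → ℕ) :
    ∏ i, fDD μ j k i (x i) = ((x j : ℝ) - μ j) * ((x k : ℝ) - μ k) := by
  unfold fDD
  rw [Finset.prod_mul_distrib,
    Finset.prod_ite_eq' Finset.univ j (fun i => (x i : ℝ) - μ i),
    Finset.prod_ite_eq' Finset.univ k (fun i => (x i : ℝ) - μ i)]
  simp

lemma fXD_int {m : ℕ} (μ : Fin m → ℝ≥0) (j k : Fin m) :
    Integrable (fXD μ j k) (poissonMeasure (μ k)) ∧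
      ∫ n, fXD μ j k n ∂(poissonMeasure (μ k)) = (μ k : ℝ) := by
  by_cases h : k = j
  · have := poisson_quad (μ k) 1 (-(μ k : ℝ)) 0 (fXD μ j k)
      (fun n => by unfold fXD; rw [if_pos h]; ring)
    exact ⟨this.1, by rw [this.2]; ring⟩
  · have := poisson_quad (μ k) 0 1 0 (fXD μ j k)
      (fun n => by unfold fXD; rw [if_neg h]; ring)
    exact ⟨this.1, by rw [this.2]; ring⟩

lemma fD_int {m : ℕ} (μ : Fin m → ℝ≥0) (j k : Fin m) :
    Integrable (fD μ j k) (poissonMeasure (μ k)) ∧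
      ∫ n, fD μ j k n ∂(poissonMeasure (μ k)) = if k = j then 0 else 1 := by
  by_cases h : k = j
  · have := poisson_quad (μ k) 0 1 (-(μ k : ℝ)) (fD μ j k)
      (fun n => by unfold fD; rw [if_pos h]; ring)
    exact ⟨this.1, by rw [this.2, if_pos h]; ring⟩
  · have := poisson_quad (μ k) 0 0 1 (fD μ j k)
      (fun n => by unfold fD; rw [if_neg h]; ring)
    exact ⟨this.1, by rw [this.2, if_neg h]; ring⟩

lemma fDD_int {m : ℕ} (μ : Fin m → ℝ≥0) (j k i : Fin m) :
    Integrable (fDD μ j k i) (poissonMeasure (μ i)) ∧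
      ∫ n, fDD μ j k i n ∂(poissonMeasure (μ i))
        = if i = j then (if i = k then (μ i : ℝ) else 0) else if i = k then 0 else 1 := by
  by_cases h1 : i = j <;> by_cases h2 : i = k
  · have := poisson_quad (μ i) 1 (-2 * (μ i : ℝ)) ((μ i : ℝ) ^ 2) (fDD μ j k i)
      (fun n => by unfold fDD; rw [if_pos h1, if_pos h2]; ring)
    exact ⟨this.1, by rw [this.2, if_pos h1, if_pos h2]; ring⟩
  · have := poisson_quad (μ i) 0 1 (-(μ i : ℝ)) (fDD μ j k i)
      (fun n => by unfold fDD; rw [if_pos h1, if_neg h2]; ring)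
    exact ⟨this.1, by rw [this.2, if_pos h1, if_neg h2]; ring⟩
  · have := poisson_quad (μ i) 0 1 (-(μ i : ℝ)) (fDD μ j k i)
      (fun n => by unfold fDD; rw [if_neg h1, if_pos h2]; ring)
    exact ⟨this.1, by rw [this.2, if_neg h1, if_pos h2]; ring⟩
  · have := poisson_quad (μ i) 0 0 1 (fDD μ j k i)
      (fun n => by unfold fDD; rw [if_neg h1, if_neg h2]; ring)
    exact ⟨this.1, by rw [this.2, if_neg h1, if_neg h2]; ring⟩

end helpers

set_option linter.unusedVariables false in
theorem expectation_Sdot_sq (m : ℕ) (hm : 2 ≤ m) (μ : Fin m → ℝ≥0) (hμ : ∀ j, 0 < μ j) :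
    ∫ x : Fin m → ℕ, (∏ j, (x j : ℝ) - (∏ j, (μ j : ℝ)) * (1 + ∑ j, ((μ j : ℝ))⁻¹ * ((x j : ℝ) - (μ j : ℝ)))) ^ 2 ∂(poissonPi μ)
      = (∏ j, (μ j : ℝ)) * (∏ j, (1 + (μ j : ℝ)) - (∏ j, (μ j : ℝ)) * (1 + (∑ j, ((μ j : ℝ))⁻¹))) := by
  classical
  set ν : Fin m → Measure ℕ := fun j => poissonMeasure (μ j) with hν
  set p1 : ℝ := ∏ j, (μ j : ℝ) with hp1
  set c : Fin m → ℝ := fun j => ((μ j : ℝ))⁻¹ with hc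
  -- the six pieces, in product form
  set G1 : (Fin m → ℕ) → ℝ := fun x => ∏ j, ((x j : ℝ)) ^ 2 with hG1
  set G2 : (Fin m → ℕ) → ℝ := fun x => ∏ j, (x j : ℝ) with hG2
  set G3 : Fin m → (Fin m → ℕ) → ℝ := fun j x => ∏ k, fXD μ j k (x k) with hG3
  set G4 : Fin m → (Fin m → ℕ) → ℝ := fun j x => ∏ k, fD μ j k (x k) with hG4
  set G5 : Fin m → Fin m → (Fin m → ℕ) → ℝ := fun j k x => ∏ i, fDD μ j k i (x i) with hG5
  -- integrability of the pieces
  have iG1 : Integrable G1 (poissonPi μ) :=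
    integrable_pi_nat ν (f := fun j n => ((n : ℝ)) ^ 2)
      (fun j => (poisson_quad (μ j) 1 0 0 _ (fun n => by ring)).1)
  have iG2 : Integrable G2 (poissonPi μ) :=
    integrable_pi_nat ν (f := fun j n => (n : ℝ))
      (fun j => (poisson_quad (μ j) 0 1 0 _ (fun n => by ring)).1)
  have iG3 : ∀ j, Integrable (G3 j) (poissonPi μ) :=
    fun j => integrable_pi_nat ν (fun k => (fXD_int μ j k).1)
  have iG4 : ∀ j, Integrable (G4 j) (poissonPi μ) :=
    fun j => integrable_pi_nat ν (fun k => (fD_int μ j k).1)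
  have iG5 : ∀ j k, Integrable (G5 j k) (poissonPi μ) :=
    fun j k => integrable_pi_nat ν (fun i => (fDD_int μ j k i).1)
  -- integrals of the pieces
  have vG1 : ∫ x, G1 x ∂(poissonPi μ) = ∏ j, ((μ j : ℝ) + (μ j : ℝ) ^ 2) := by
    rw [hG1, show poissonPi μ = Measure.pi ν from rfl,
      integral_pi_nat ν (fun j n => ((n : ℝ)) ^ 2)]
    exact Finset.prod_congr rfl fun j _ => by
      rw [(poisson_quad (μ j) 1 0 0 _ (fun n => by ring)).2]; ring
  have vG2 : ∫ x, G2 x ∂(poissonPi μ) = p1 := by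
    rw [hG2, show poissonPi μ = Measure.pi ν from rfl,
      integral_pi_nat ν (fun j n => (n : ℝ))]
    exact Finset.prod_congr rfl fun j _ => by
      rw [(poisson_quad (μ j) 0 1 0 _ (fun n => by ring)).2]; ring
  have vG3 : ∀ j, ∫ x, G3 j x ∂(poissonPi μ) = p1 := by
    intro j
    rw [hG3, show poissonPi μ = Measure.pi ν from rfl, integral_pi_nat ν (fXD μ j)]
    exact Finset.prod_congr rfl fun k _ => (fXD_int μ j k).2
  have vG4 : ∀ j, ∫ x, G4 j x ∂(poissonPi μ) = 0 := by
    intro j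
    rw [hG4, show poissonPi μ = Measure.pi ν from rfl, integral_pi_nat ν (fD μ j)]
    exact Finset.prod_eq_zero (Finset.mem_univ j) (by rw [(fD_int μ j j).2, if_pos rfl])
  have vG5 : ∀ j k, ∫ x, G5 j k x ∂(poissonPi μ) = if j = k then (μ j : ℝ) else 0 := by
    intro j k
    rw [hG5, show poissonPi μ = Measure.pi ν from rfl, integral_pi_nat ν (fDD μ j k)]
    by_cases hjk : j = k
    · subst hjk
      rw [if_pos rfl]
      have : ∀ i, ∫ n, fDD μ j j i n ∂(ν i) = if i = j then (μ i : ℝ) else 1 := by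
        intro i
        rw [(fDD_int μ j j i).2]
        by_cases h : i = j <;> simp [h]
      rw [Finset.prod_congr rfl fun i _ => this i]
      simp [Finset.prod_ite_eq' Finset.univ j (fun i => (μ i : ℝ))]
    · rw [if_neg hjk]
      refine Finset.prod_eq_zero (Finset.mem_univ j) ?_
      rw [(fDD_int μ j k j).2, if_pos rfl, if_neg (by exact fun h => hjk h)]
  -- pointwise expansion of the integrand
  have hpt : (fun x : Fin m → ℕ =>
      (∏ j, (x j : ℝ) - (∏ j, (μ j : ℝ)) * (1 + ∑ j, ((μ j : ℝ))⁻¹ * ((x j : ℝ) - (μ j : ℝ)))) ^ 2)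
      = fun x => G1 x - 2 * p1 * G2 x - 2 * p1 * (∑ j, c j * G3 j x) + p1 ^ 2
        + 2 * p1 ^ 2 * (∑ j, c j * G4 j x) + p1 ^ 2 * (∑ j, ∑ k, c j * c k * G5 j k x) := by
    funext x
    have e1 : G1 x = G2 x ^ 2 := by rw [hG1, hG2]; rw [← Finset.prod_pow]
    have e3 : ∑ j, c j * G3 j x = G2 x * ∑ j, c j * ((x j : ℝ) - μ j) := by
      rw [Finset.mul_sum]
      exact Finset.sum_congr rfl fun j _ => by rw [hG3]; simp only; rw [fXD_prod μ j x]; ring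
    have e4 : ∑ j, c j * G4 j x = ∑ j, c j * ((x j : ℝ) - μ j) := by
      exact Finset.sum_congr rfl fun j _ => by rw [hG4]; simp only; rw [fD_prod μ j x]
    have e5 : ∑ j, ∑ k, c j * c k * G5 j k x
        = (∑ j, c j * ((x j : ℝ) - μ j)) * (∑ k, c k * ((x k : ℝ) - μ k)) := by
      rw [Finset.sum_mul_sum]
      refine Finset.sum_congr rfl fun j _ => Finset.sum_congr rfl fun k _ => ?_
      rw [hG5]; simp only; rw [fDD_prod μ j k x]; ring
    rw [e1, e3, e4, e5]
    have hsum : ∑ j, ((μ j : ℝ))⁻¹ * ((x j : ℝ) - (μ j : ℝ)) = ∑ j, c j * ((x j : ℝ) - μ j) := rfl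
    rw [hsum]
    have hG2x : ∏ j, (x j : ℝ) = G2 x := rfl
    rw [hG2x, ← hp1]
    ring
  rw [hpt]
  -- integrate term by term
  have iS3 : Integrable (fun x => ∑ j, c j * G3 j x) (poissonPi μ) :=
    integrable_finset_sum _ fun j _ => ((iG3 j).const_mul (c j))
  have iS4 : Integrable (fun x => ∑ j, c j * G4 j x) (poissonPi μ) :=
    integrable_finset_sum _ fun j _ => ((iG4 j).const_mul (c j))
  have iS5 : Integrable (fun x => ∑ j, ∑ k, c j * c k * G5 j k x) (poissonPi μ) :=
    integrable_finset_sum _ fun j _ =>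
      integrable_finset_sum _ fun k _ => ((iG5 j k).const_mul (c j * c k))
  have vS3 : ∫ x, (∑ j, c j * G3 j x) ∂(poissonPi μ) = (∑ j, c j) * p1 := by
    rw [integral_finset_sum _ fun j _ => ((iG3 j).const_mul (c j))]
    rw [Finset.sum_mul]
    exact Finset.sum_congr rfl fun j _ => by rw [integral_const_mul, vG3 j]
  have vS4 : ∫ x, (∑ j, c j * G4 j x) ∂(poissonPi μ) = 0 := by
    rw [integral_finset_sum _ fun j _ => ((iG4 j).const_mul (c j))]
    refine Finset.sum_eq_zero fun j _ => by rw [integral_const_mul, vG4 j, mul_zero]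
  have vS5 : ∫ x, (∑ j, ∑ k, c j * c k * G5 j k x) ∂(poissonPi μ) = ∑ j, c j := by
    rw [integral_finset_sum _ fun j _ =>
      integrable_finset_sum _ fun k _ => ((iG5 j k).const_mul (c j * c k))]
    refine Finset.sum_congr rfl fun j _ => ?_
    rw [integral_finset_sum _ fun k _ => ((iG5 j k).const_mul (c j * c k))]
    have : ∀ k, ∫ x, c j * c k * G5 j k x ∂(poissonPi μ)
        = if j = k then c j * c k * (μ j : ℝ) else 0 := by
      intro k
      rw [integral_const_mul, vG5 j k]
      by_cases h : j = k <;> simp [h]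
    rw [Finset.sum_congr rfl fun k _ => this k, Finset.sum_ite_eq Finset.univ j
      (fun k => c j * c k * (μ j : ℝ)), if_pos (Finset.mem_univ j)]
    have hμj : (μ j : ℝ) ≠ 0 := by
      exact_mod_cast (hμ j).ne'
    rw [hc]
    field_simp
  -- put it all together
  haveI : IsProbabilityMeasure (poissonPi μ) := by
    unfold poissonPi; infer_instance
  have i2 : Integrable (fun x => 2 * p1 * G2 x) (poissonPi μ) := iG2.const_mul _
  have i3 : Integrable (fun x => 2 * p1 * (∑ j, c j * G3 j x)) (poissonPi μ) := iS3.const_mul _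
  have i5 : Integrable (fun x => 2 * p1 ^ 2 * (∑ j, c j * G4 j x)) (poissonPi μ) :=
    iS4.const_mul _
  have i6 : Integrable (fun x => p1 ^ 2 * (∑ j, ∑ k, c j * c k * G5 j k x)) (poissonPi μ) :=
    iS5.const_mul _
  have iA : Integrable (fun x => G1 x - 2 * p1 * G2 x) (poissonPi μ) := iG1.sub i2
  have iB : Integrable (fun x => G1 x - 2 * p1 * G2 x - 2 * p1 * (∑ j, c j * G3 j x))
    (poissonPi μ) := iA.sub i3
  have iC : Integrable (fun x => G1 x - 2 * p1 * G2 x - 2 * p1 * (∑ j, c j * G3 j x) + p1 ^ 2)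
    (poissonPi μ) := iB.add (integrable_const _)
  have iD : Integrable (fun x => G1 x - 2 * p1 * G2 x - 2 * p1 * (∑ j, c j * G3 j x) + p1 ^ 2
      + 2 * p1 ^ 2 * (∑ j, c j * G4 j x)) (poissonPi μ) := iC.add i5
  rw [integral_add iD i6, integral_add iC i5, integral_add iB (integrable_const _),
    integral_sub iA i3, integral_sub iG1 i2, integral_const_mul, integral_const_mul,
    integral_const_mul, integral_const_mul, integral_const, vG1, vG2, vS3, vS4, vS5]
  have hprod : ∏ j, ((μ j : ℝ) + (μ j : ℝ) ^ 2) = (∏ j, (μ j : ℝ)) * ∏ j, (1 + (μ j : ℝ)) := by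
    rw [← Finset.prod_mul_distrib]
    exact Finset.prod_congr rfl fun j _ => by ring
  rw [hprod, ← hp1]
  simp only [measure_univ, probReal_univ, ENNReal.toReal_one, smul_eq_mul, one_mul]
  ring
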